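/- For φ₀ = 0 or φ₀ = π, the quantity G = ρ (r cos ψ ± σ) (with + for φ₀ = 0, − for φ₀ = π) is a first integral of the system m ρ ψ' = r cos ψ ± σ, m ρ' = r sin ψ, and along solutions with G ≠ 0 the angle satisfies the reduced equation ψ' = (1/(mG)) (r cos ψ ± σ)². -/

import Mathlib

open Real

theorem sin_phi0_zero_first_integral_and_reduced_equation
    (r σ m ε : ℝ) (hr : 0 < r) (hσ : 0 < σ) (hm : 0 < m)
    (hε : ε = 1 ∨ ε = -1)
    (ρ ψ : ℝ → ℝ) (hρpos : ∀ t, 0 < ρ t)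
    (hψ : ∀ t, HasDerivAt ψ ((r * cos (ψ t) + ε * σ) / (m * ρ t)) t)
    (hρ : ∀ t, HasDerivAt ρ ((r * sin (ψ t)) / m) t)
    (G : ℝ) (hG : G = ρ 0 * (r * cos (ψ 0) + ε * σ)) :
    (∀ t, ρ t * (r * cos (ψ t) + ε * σ) = G) ∧
    (G ≠ 0 → ∀ t, HasDerivAt ψ ((r * cos (ψ t) + ε * σ) ^ 2 / (m * G)) t) := by
  have hm' : m ≠ 0 := ne_of_gt hm
  have hconst : ∀ t, ρ t * (r * cos (ψ t) + ε * σ) = G := by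
    have hF : ∀ t, HasDerivAt (fun t => ρ t * (r * cos (ψ t) + ε * σ)) 0 t := by
      intro t
      have hρt := (hρpos t).ne'
      have h1 : HasDerivAt (fun t => r * cos (ψ t) + ε * σ)
          (-(r * sin (ψ t)) * ((r * cos (ψ t) + ε * σ) / (m * ρ t))) t := by
        have := ((hψ t).cos.const_mul r).add_const (ε * σ)
        exact this.congr_deriv (by ring)
      have h2 := (hρ t).mul h1
      refine h2.congr_deriv ?_
      field_simp
      ring
    intro t
    have : ∀ s, ρ s * (r * cos (ψ s) + ε * σ) = ρ 0 * (r * cos (ψ 0) + ε * σ) := by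
      intro s
      have := is_const_of_deriv_eq_zero (f := fun t => ρ t * (r * cos (ψ t) + ε * σ))
        (fun x => (hF x).differentiableAt) (fun x => (hF x).deriv) s 0
      simpa using this
    rw [this t, hG]
  refine ⟨hconst, fun hGne t => ?_⟩
  have hρt := (hρpos t).ne'
  have hc : r * cos (ψ t) + ε * σ ≠ 0 := by
    intro h
    apply hGne
    rw [← hconst t, h, mul_zero]
  have := hψ t
  convert this using 1
  rw [← hconst t]
  field_simp
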